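/- Let (u_p, u_e) be a solution of the bulk system, positive on an interval [0, R₁), with F u_p(0)^{3/2} − E u_e(0)^{3/2} < 0 and B u_e(0)^{3/2} − A u_p(0)^{3/2} < 0. If u_p'(R₀) > 0 for some R₀ ∈ (0, R₁), then u_p'(r) ≥ 0 and u_e'(r) ≤ 0 for all r ∈ [R₀, R₁); symmetrically, if u_e'(R₀) > 0 then u_e'(r) ≥ 0 and u_p'(r) ≤ 0 for all r ∈ [R₀, R₁). In particular, both densities cannot be simultaneously increasing. -/

import Mathlib

open Set Filter

noncomputable section

/-- `(u_p, u_e)` is a solution of the bulk system on the set `s ⊆ [0,∞)` (which should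
contain `0`): both functions are `C²` on `s`, satisfy the initial conditions
`u_p(0) = α`, `u_e(0) = β`, `u_p'(0) = u_e'(0) = 0`, are positive on `s`, and satisfy
`u_p'' + (2/r) u_p' = F u_p^{3/2} − E u_e^{3/2}`,
`u_e'' + (2/r) u_e' = B u_e^{3/2} − A u_p^{3/2}` at every `r ∈ s` with `r > 0`. -/
def IsBulkSolOn (A B E F α β : ℝ) (s : Set ℝ) (up ue : ℝ → ℝ) : Prop :=
  ContDiffOn ℝ 2 up s ∧ ContDiffOn ℝ 2 ue s ∧
  up 0 = α ∧ ue 0 = β ∧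
  derivWithin up s 0 = 0 ∧ derivWithin ue s 0 = 0 ∧
  (∀ r ∈ s, 0 < r →
    derivWithin (derivWithin up s) s r + 2 / r * derivWithin up s r
      = F * up r ^ ((3:ℝ)/2) - E * ue r ^ ((3:ℝ)/2) ∧
    derivWithin (derivWithin ue s) s r + 2 / r * derivWithin ue s r
      = B * ue r ^ ((3:ℝ)/2) - A * up r ^ ((3:ℝ)/2)) ∧
  (∀ r ∈ s, 0 < up r ∧ 0 < ue r)

open Topology in
set_option maxHeartbeats 1000000 in
private lemma key (A B E F : ℝ) (hA : 0 < A) (hB : 0 < B) (hE : 0 < E) (hF : 0 < F)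
    (hBFEA : B * F < E * A)
    (α β R₁ : ℝ) (hR₁ : 0 < R₁)
    (up ue : ℝ → ℝ) (hsol : IsBulkSolOn A B E F α β (Ico 0 R₁) up ue)
    (R₀ : ℝ) (hR₀ : R₀ ∈ Ioo 0 R₁)
    (hinc : 0 < derivWithin up (Ico 0 R₁) R₀) :
    ∀ r ∈ Ico R₀ R₁,
      0 ≤ derivWithin up (Ico 0 R₁) r ∧ derivWithin ue (Ico 0 R₁) r ≤ 0 := by
  obtain ⟨hup, hue, -, -, hp0, he0, hode, hpos⟩ := hsol
  set s : Set ℝ := Ico 0 R₁ with hs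
  set p : ℝ → ℝ := derivWithin up s with hpdef
  set e : ℝ → ℝ := derivWithin ue s with hedef
  obtain ⟨hR₀0, hR₀1⟩ := hR₀
  have hconv : Convex ℝ s := convex_Ico 0 R₁
  have hint : interior s = Ioo 0 R₁ := interior_Ico
  have huniq : UniqueDiffOn ℝ s := uniqueDiffOn_Ico 0 R₁
  have hupd : DifferentiableOn ℝ up s := hup.differentiableOn two_ne_zero
  have hued : DifferentiableOn ℝ ue s := hue.differentiableOn two_ne_zero
  have hpC : ContDiffOn ℝ 1 p s := hup.derivWithin huniq (by norm_num)
  have heC : ContDiffOn ℝ 1 e s := hue.derivWithin huniq (by norm_num)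
  have hpc : ContinuousOn p s := hpC.continuousOn
  have hec : ContinuousOn e s := heC.continuousOn
  have hpd : DifferentiableOn ℝ p s := hpC.differentiableOn one_ne_zero
  have hed : DifferentiableOn ℝ e s := heC.differentiableOn one_ne_zero
  have hmem : ∀ {r : ℝ}, r ∈ Ioo 0 R₁ → s ∈ 𝓝 r := fun hr => Ico_mem_nhds hr.1 hr.2
  have hsub : ∀ {r : ℝ}, r ∈ Ioo 0 R₁ → r ∈ s := fun hr => ⟨hr.1.le, hr.2⟩
  -- HasDerivAt facts
  have hupH : ∀ r ∈ Ioo 0 R₁, HasDerivAt up (p r) r := fun r hr =>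
    ((hupd r (hsub hr)).hasDerivWithinAt).hasDerivAt (hmem hr)
  have hueH : ∀ r ∈ Ioo 0 R₁, HasDerivAt ue (e r) r := fun r hr =>
    ((hued r (hsub hr)).hasDerivWithinAt).hasDerivAt (hmem hr)
  have hpH : ∀ r ∈ Ioo 0 R₁, HasDerivAt p (derivWithin p s r) r := fun r hr =>
    ((hpd r (hsub hr)).hasDerivWithinAt).hasDerivAt (hmem hr)
  have heH : ∀ r ∈ Ioo 0 R₁, HasDerivAt e (derivWithin e s r) r := fun r hr =>
    ((hed r (hsub hr)).hasDerivWithinAt).hasDerivAt (hmem hr)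
  -- derivative of X = r^2 * p r
  have hXH : ∀ r ∈ Ioo 0 R₁, HasDerivAt (fun t => t ^ 2 * p t)
      (r ^ 2 * (F * up r ^ ((3:ℝ)/2) - E * ue r ^ ((3:ℝ)/2))) r := by
    intro r hr
    have h1 := (hasDerivAt_pow 2 r).mul (hpH r hr)
    have hode1 := (hode r (hsub hr) hr.1).1
    have hr0 : r ≠ 0 := ne_of_gt hr.1
    have h2 : derivWithin p s r = (F * up r ^ ((3:ℝ)/2) - E * ue r ^ ((3:ℝ)/2)) - 2 / r * p r := by
      linarith [hode1]
    rw [h2] at h1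
    refine HasDerivAt.congr_deriv h1 ?_
    push_cast
    have h3 : r * (2 / r) = 2 := by field_simp
    linear_combination (-(r * p r)) * h3
  have hYH : ∀ r ∈ Ioo 0 R₁, HasDerivAt (fun t => t ^ 2 * e t)
      (r ^ 2 * (B * ue r ^ ((3:ℝ)/2) - A * up r ^ ((3:ℝ)/2))) r := by
    intro r hr
    have h1 := (hasDerivAt_pow 2 r).mul (heH r hr)
    have hode1 := (hode r (hsub hr) hr.1).2
    have hr0 : r ≠ 0 := ne_of_gt hr.1
    have h2 : derivWithin e s r = (B * ue r ^ ((3:ℝ)/2) - A * up r ^ ((3:ℝ)/2)) - 2 / r * e r := by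
      linarith [hode1]
    rw [h2] at h1
    refine HasDerivAt.congr_deriv h1 ?_
    push_cast
    have h3 : r * (2 / r) = 2 := by field_simp
    linear_combination (-(r * e r)) * h3
  -- Z = A X + F Y is strictly decreasing on s
  have hXc : ContinuousOn (fun t => t ^ 2 * p t) s := ((continuous_pow 2).continuousOn).mul hpc
  have hYc : ContinuousOn (fun t => t ^ 2 * e t) s := ((continuous_pow 2).continuousOn).mul hec
  have hZanti : StrictAntiOn (fun t => A * (t ^ 2 * p t) + F * (t ^ 2 * e t)) s := by
    apply strictAntiOn_of_deriv_neg hconv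
    · exact (continuousOn_const.mul hXc).add (continuousOn_const.mul hYc)
    · intro x hx
      rw [hint] at hx
      have hZH : HasDerivAt (fun t => A * (t ^ 2 * p t) + F * (t ^ 2 * e t))
          (A * (x ^ 2 * (F * up x ^ ((3:ℝ)/2) - E * ue x ^ ((3:ℝ)/2)))
            + F * (x ^ 2 * (B * ue x ^ ((3:ℝ)/2) - A * up x ^ ((3:ℝ)/2)))) x :=
        ((hXH x hx).const_mul A).add ((hYH x hx).const_mul F)
      rw [hZH.deriv]
      have hQ : 0 < ue x ^ ((3:ℝ)/2) := Real.rpow_pos_of_pos (hpos x (hsub hx)).2 _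
      have hx2 : 0 < x ^ 2 := pow_pos hx.1 2
      nlinarith [mul_pos hx2 hQ]
  have hZneg : ∀ r ∈ Ioo 0 R₁, A * (r ^ 2 * p r) + F * (r ^ 2 * e r) < 0 := by
    intro r hr
    have h0s : (0:ℝ) ∈ s := ⟨le_rfl, hR₁⟩
    have := hZanti h0s (hsub hr) hr.1
    simpa using this
  have heneg : ∀ r ∈ Ioo 0 R₁, 0 ≤ p r → e r < 0 := by
    intro r hr hpr
    have h1 := hZneg r hr
    have hr2 : 0 < r ^ 2 := pow_pos hr.1 2
    nlinarith [mul_nonneg (mul_nonneg hA.le hr2.le) hpr, mul_pos hF hr2]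
  -- monotonicity of φ
  have hφmono : ∀ a b : ℝ, 0 < a → b < R₁ → a ≤ b →
      (∀ x ∈ Ioo a b, 0 ≤ p x) → (∀ x ∈ Ioo a b, e x ≤ 0) →
      F * up a ^ ((3:ℝ)/2) - E * ue a ^ ((3:ℝ)/2)
        ≤ F * up b ^ ((3:ℝ)/2) - E * ue b ^ ((3:ℝ)/2) := by
    intro a b ha hb hab hp he
    have hIcc : Icc a b ⊆ s := fun x hx => ⟨le_trans ha.le hx.1, lt_of_le_of_lt hx.2 hb⟩
    have hIoo : Ioo a b ⊆ Ioo 0 R₁ := fun x hx => ⟨lt_trans ha hx.1, lt_trans hx.2 hb⟩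
    have hupm : MonotoneOn up (Icc a b) := by
      apply monotoneOn_of_deriv_nonneg (convex_Icc a b) (hup.continuousOn.mono hIcc)
      · rw [interior_Icc]
        exact fun x hx => ((hupH x (hIoo hx)).differentiableAt).differentiableWithinAt
      · rw [interior_Icc]
        intro x hx
        rw [(hupH x (hIoo hx)).deriv]
        exact hp x hx
    have huem : AntitoneOn ue (Icc a b) := by
      apply antitoneOn_of_deriv_nonpos (convex_Icc a b) (hue.continuousOn.mono hIcc)
      · rw [interior_Icc]
        exact fun x hx => ((hueH x (hIoo hx)).differentiableAt).differentiableWithinAt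
      · rw [interior_Icc]
        intro x hx
        rw [(hueH x (hIoo hx)).deriv]
        exact he x hx
    have h1 : up a ≤ up b := hupm ⟨le_rfl, hab⟩ ⟨hab, le_rfl⟩ hab
    have h2 : ue b ≤ ue a := huem ⟨le_rfl, hab⟩ ⟨hab, le_rfl⟩ hab
    have hupa : 0 < up a := (hpos a (hIcc ⟨le_rfl, hab⟩)).1
    have hueb : 0 < ue b := (hpos b (hIcc ⟨hab, le_rfl⟩)).2
    have h3 : up a ^ ((3:ℝ)/2) ≤ up b ^ ((3:ℝ)/2) :=
      Real.rpow_le_rpow hupa.le h1 (by norm_num)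
    have h4 : ue b ^ ((3:ℝ)/2) ≤ ue a ^ ((3:ℝ)/2) :=
      Real.rpow_le_rpow hueb.le h2 (by norm_num)
    nlinarith
  -- Step A : last point r₂ ≤ R₀ where p ≤ 0
  set K : Set ℝ := Icc 0 R₀ ∩ p ⁻¹' Iic 0 with hK
  have hKIcc : Icc 0 R₀ ⊆ s := fun x hx => ⟨hx.1, lt_of_le_of_lt hx.2 hR₀1⟩
  have hKcl : IsClosed K := (hpc.mono hKIcc).preimage_isClosed_of_isClosed isClosed_Icc isClosed_Iic
  have hKne : K.Nonempty := ⟨0, ⟨le_rfl, hR₀0.le⟩, by simpa using hp0.le⟩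
  have hKbdd : BddAbove K := BddAbove.mono (fun x hx => hx.1) bddAbove_Icc
  set r₂ : ℝ := sSup K with hr₂def
  have hr₂K : r₂ ∈ K := hKcl.csSup_mem hKne hKbdd
  have hr₂0 : 0 ≤ r₂ := hr₂K.1.1
  have hr₂le : r₂ ≤ R₀ := hr₂K.1.2
  have hr₂p : p r₂ ≤ 0 := hr₂K.2
  have hr₂lt : r₂ < R₀ := lt_of_le_of_ne hr₂le (fun h => by rw [h] at hr₂p; linarith)
  have hppos : ∀ x ∈ Ioc r₂ R₀, 0 < p x := by
    intro x hx
    by_contra h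
    have hxK : x ∈ K := ⟨⟨le_trans hr₂0 hx.1.le, hx.2⟩, le_of_not_gt h⟩
    exact absurd (le_csSup hKbdd hxK) (not_le.mpr hx.1)
  -- Step B : MVT gives ξ with φ ξ > 0
  have hIccs : Icc r₂ R₀ ⊆ s := fun x hx => ⟨le_trans hr₂0 hx.1, lt_of_le_of_lt hx.2 hR₀1⟩
  obtain ⟨ξ, hξmem, hξ⟩ := exists_hasDerivAt_eq_slope (fun t => t ^ 2 * p t)
    (fun r => r ^ 2 * (F * up r ^ ((3:ℝ)/2) - E * ue r ^ ((3:ℝ)/2))) hr₂lt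
    (hXc.mono hIccs)
    (fun x hx => hXH x ⟨lt_of_le_of_lt hr₂0 hx.1, lt_trans hx.2 hR₀1⟩)
  have hξ0 : 0 < ξ := lt_of_le_of_lt hr₂0 hξmem.1
  have hslope : 0 < R₀ ^ 2 * p R₀ - r₂ ^ 2 * p r₂ := by
    nlinarith [mul_pos (pow_pos hR₀0 2) hinc, mul_nonpos_of_nonneg_of_nonpos (sq_nonneg r₂) hr₂p]
  have hφξ : 0 < F * up ξ ^ ((3:ℝ)/2) - E * ue ξ ^ ((3:ℝ)/2) := by
    have hden : 0 < R₀ - r₂ := by linarith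
    have h1 : 0 < ξ ^ 2 * (F * up ξ ^ ((3:ℝ)/2) - E * ue ξ ^ ((3:ℝ)/2)) := by
      rw [hξ]
      exact div_pos (by simpa using hslope) hden
    nlinarith [sq_nonneg ξ]
  -- Step C : φ R₀ > 0
  have hφR₀ : 0 < F * up R₀ ^ ((3:ℝ)/2) - E * ue R₀ ^ ((3:ℝ)/2) := by
    refine lt_of_lt_of_le hφξ (hφmono ξ R₀ hξ0 hR₀1 hξmem.2.le ?_ ?_)
    · exact fun x hx => (hppos x ⟨lt_trans hξmem.1 hx.1, hx.2.le⟩).le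
    · intro x hx
      have hx' : x ∈ Ioo 0 R₁ := ⟨lt_trans hξ0 hx.1, lt_trans hx.2 hR₀1⟩
      exact (heneg x hx' (hppos x ⟨lt_trans hξmem.1 hx.1, hx.2.le⟩).le).le
  -- Step D : main invariance claim
  have main : ∀ c ∈ Ico R₀ R₁, 0 < p c ∧
      0 < F * up c ^ ((3:ℝ)/2) - E * ue c ^ ((3:ℝ)/2) := by
    intro c hc
    by_contra hcon
    set bad : Set ℝ := (Icc R₀ c ∩ p ⁻¹' Iic 0) ∪
      (Icc R₀ c ∩ (fun r => F * up r ^ ((3:ℝ)/2) - E * ue r ^ ((3:ℝ)/2)) ⁻¹' Iic 0) with hbad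
    have hIccc : Icc R₀ c ⊆ s := fun x hx => ⟨le_trans hR₀0.le hx.1, lt_of_le_of_lt hx.2 hc.2⟩
    have hφcont : ContinuousOn (fun r => F * up r ^ ((3:ℝ)/2) - E * ue r ^ ((3:ℝ)/2)) s := by
      apply ContinuousOn.sub
      · exact continuousOn_const.mul (hup.continuousOn.rpow_const
          (fun x hx => Or.inr (by norm_num)))
      · exact continuousOn_const.mul (hue.continuousOn.rpow_const
          (fun x hx => Or.inr (by norm_num)))
    have hbadcl : IsClosed bad := by
      apply IsClosed.union
      · exact (hpc.mono hIccc).preimage_isClosed_of_isClosed isClosed_Icc isClosed_Iic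
      · exact (hφcont.mono hIccc).preimage_isClosed_of_isClosed isClosed_Icc isClosed_Iic
    have hcbad : c ∈ bad := by
      push_neg at hcon
      rcases le_or_gt (p c) 0 with h | h
      · exact Or.inl ⟨⟨hc.1, le_rfl⟩, h⟩
      · exact Or.inr ⟨⟨hc.1, le_rfl⟩, hcon h⟩
    have hbadne : bad.Nonempty := ⟨c, hcbad⟩
    have hbdd : BddBelow bad := by
      refine BddBelow.mono ?_ (bddBelow_Icc (a := c) (b := R₀))
      intro x hx
      rcases hx with h | h <;> exact h.1
    set T : ℝ := sInf bad with hTdef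
    have hT : T ∈ bad := hbadcl.csInf_mem hbadne hbdd
    have hTmem : T ∈ Icc R₀ c := by rcases hT with h | h <;> exact h.1
    have hTR₁ : T < R₁ := lt_of_le_of_lt hTmem.2 hc.2
    have hlt : ∀ x ∈ Ico R₀ T, 0 < p x ∧
        0 < F * up x ^ ((3:ℝ)/2) - E * ue x ^ ((3:ℝ)/2) := by
      intro x hx
      by_contra h
      push_neg at h
      have hxbad : x ∈ bad := by
        rcases le_or_gt (p x) 0 with h1 | h1
        · exact Or.inl ⟨⟨hx.1, le_trans hx.2.le hTmem.2⟩, h1⟩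
        · exact Or.inr ⟨⟨hx.1, le_trans hx.2.le hTmem.2⟩, h h1⟩
      exact absurd (csInf_le hbdd hxbad) (not_le.mpr hx.2)
    have hR₀T : R₀ < T := by
      rcases lt_or_eq_of_le hTmem.1 with h | h
      · exact h
      · exfalso
        rcases hT with h1 | h1
        · rw [← h] at h1; exact absurd h1.2 (by simpa using not_le.mpr hinc)
        · rw [← h] at h1; exact absurd h1.2 (by simpa using not_le.mpr hφR₀)
    have hpnn : ∀ x ∈ Ioo R₀ T, 0 ≤ p x := fun x hx => (hlt x ⟨hx.1.le, hx.2⟩).1.le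
    have henp : ∀ x ∈ Ioo R₀ T, e x ≤ 0 := fun x hx =>
      (heneg x ⟨lt_trans hR₀0 hx.1, lt_trans hx.2 hTR₁⟩ (hpnn x hx)).le
    have hφT : 0 < F * up T ^ ((3:ℝ)/2) - E * ue T ^ ((3:ℝ)/2) :=
      lt_of_lt_of_le hφR₀ (hφmono R₀ T hR₀0 hTR₁ hR₀T.le hpnn henp)
    have hIccT : Icc R₀ T ⊆ s := fun x hx => ⟨le_trans hR₀0.le hx.1, lt_of_le_of_lt hx.2 hTR₁⟩
    have hXmono : StrictMonoOn (fun t => t ^ 2 * p t) (Icc R₀ T) := by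
      apply strictMonoOn_of_deriv_pos (convex_Icc R₀ T) (hXc.mono hIccT)
      intro x hx
      rw [interior_Icc] at hx
      have hx' : x ∈ Ioo 0 R₁ := ⟨lt_trans hR₀0 hx.1, lt_trans hx.2 hTR₁⟩
      rw [(hXH x hx').deriv]
      have hφx := (hlt x ⟨hx.1.le, hx.2⟩).2
      exact mul_pos (pow_pos (lt_trans hR₀0 hx.1) 2) hφx
    have hpT : 0 < p T := by
      have h1 : R₀ ^ 2 * p R₀ < T ^ 2 * p T :=
        hXmono ⟨le_rfl, hR₀T.le⟩ ⟨hR₀T.le, le_rfl⟩ hR₀T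
      have h2 : 0 < R₀ ^ 2 * p R₀ := mul_pos (pow_pos hR₀0 2) hinc
      have hT2 : 0 < T ^ 2 := pow_pos (lt_of_lt_of_le hR₀0 hR₀T.le) 2
      nlinarith
    rcases hT with h1 | h1
    · exact absurd h1.2 (by simpa using not_le.mpr hpT)
    · exact absurd h1.2 (by simpa using not_le.mpr hφT)
  intro r hr
  obtain ⟨h1, h2⟩ := main r hr
  exact ⟨h1.le, (heneg r ⟨lt_of_lt_of_le hR₀0 hr.1, hr.2⟩ h1.le).le⟩

/-- Lemma 5.7: once one density starts increasing, it stays nondecreasing and the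
other density stays nonincreasing (on the interval of positivity). In particular both
densities cannot be simultaneously increasing. -/
theorem stmt14 (A B E F : ℝ) (hA : 0 < A) (hB : 0 < B) (hE : 0 < E) (hF : 0 < F)
    (hEF : F < E) (hAB : B < A) (hBFEA : B * F < E * A)
    (α β R₁ : ℝ) (hα : 0 < α) (hβ : 0 < β) (hR₁ : 0 < R₁)
    (up ue : ℝ → ℝ) (hsol : IsBulkSolOn A B E F α β (Ico 0 R₁) up ue)
    (hφ : F * α ^ ((3:ℝ)/2) - E * β ^ ((3:ℝ)/2) < 0)
    (hψ : B * β ^ ((3:ℝ)/2) - A * α ^ ((3:ℝ)/2) < 0)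
    (R₀ : ℝ) (hR₀ : R₀ ∈ Ioo 0 R₁) :
    (0 < derivWithin up (Ico 0 R₁) R₀ →
      ∀ r ∈ Ico R₀ R₁,
        0 ≤ derivWithin up (Ico 0 R₁) r ∧ derivWithin ue (Ico 0 R₁) r ≤ 0) ∧
    (0 < derivWithin ue (Ico 0 R₁) R₀ →
      ∀ r ∈ Ico R₀ R₁,
        0 ≤ derivWithin ue (Ico 0 R₁) r ∧ derivWithin up (Ico 0 R₁) r ≤ 0) := by
  have hswap : IsBulkSolOn E F A B β α (Ico 0 R₁) ue up := by
    obtain ⟨h1, h2, h3, h4, h5, h6, h7, h8⟩ := hsol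
    exact ⟨h2, h1, h4, h3, h6, h5,
      fun r hr hr0 => ⟨(h7 r hr hr0).2, (h7 r hr hr0).1⟩,
      fun r hr => ⟨(h8 r hr).2, (h8 r hr).1⟩⟩
  have hBFEA' : F * B < A * E := by rw [mul_comm F B, mul_comm A E]; exact hBFEA
  constructor
  · exact fun h => key A B E F hA hB hE hF hBFEA α β R₁ hR₁ up ue hsol R₀ hR₀ h
  · exact fun h => key E F A B hE hF hA hB hBFEA' β α R₁ hR₁ ue up hswap R₀ hR₀ h
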